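/- If a Hoffman graph 𝔫 admits two decompositions into indecomposable addends, 𝔫 = ⊕_{i=0}^{k} 𝔫^i = ⊕_{i=0}^{l} 𝔪^i, then k = l and there exists a permutation σ of {0,...,k} such that 𝔫^i = 𝔪^{σ(i)} (as induced Hoffman subgraphs) for each i. -/

import Mathlib

/-- A Hoffman graph: a finite simple graph with vertices labeled slim or fat,
fat vertices pairwise non-adjacent, each fat vertex with a slim neighbor. -/
structure HoffmanGraph (V : Type) where
  adj : V → V → Prop
  symm : Symmetric adj
  irrefl : Irreflexive adj
  slim : V → Prop
  fat_slim_nbr : ∀ x, ¬ slim x → ∃ y, slim y ∧ adj x y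
  fat_not_adj : ∀ x y, ¬ slim x → ¬ slim y → ¬ adj x y

namespace HoffmanGraph

variable {V W U : Type}

def slimSet (H : HoffmanGraph V) : Set V := {x | H.slim x}

def toSimple (H : HoffmanGraph V) : SimpleGraph V where
  Adj := H.adj
  symm := ⟨fun a b h => H.symm h⟩
  loopless := ⟨fun a => H.irrefl a⟩

/-- common fat neighbours of `x` and `y` within the carrier set `S`. -/
def fatCommonOn (H : HoffmanGraph V) (S : Set V) (x y : V) : Set V :=
  {z | z ∈ S ∧ ¬ H.slim z ∧ H.adj x z ∧ H.adj y z}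

/-- The induced Hoffman subgraph of `H` on `S` is the sum of the induced subgraphs
on the sets `P i`. -/
def IsSumOn (H : HoffmanGraph V) (S : Set V) {ι : Type} (P : ι → Set V) : Prop :=
  (∀ i, P i ⊆ S) ∧
  (⋃ i, P i) = S ∧
  (∀ x ∈ S, H.slim x → ∃! i, x ∈ P i) ∧
  (∀ i, ∀ x ∈ P i, H.slim x → ∀ z ∈ S, ¬ H.slim z → H.adj x z → z ∈ P i) ∧
  (∀ i, ∀ z ∈ P i, ¬ H.slim z → ∃ x ∈ P i, H.slim x ∧ H.adj z x) ∧
  (∀ i j, i ≠ j → ∀ x ∈ P i, ∀ y ∈ P j, H.slim x → H.slim y →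
    (H.fatCommonOn S x y).ncard ≤ 1 ∧ ((H.fatCommonOn S x y).ncard = 1 ↔ H.adj x y))

/-- Binary sum. -/
def IsSumOn2 (H : HoffmanGraph V) (S A B : Set V) : Prop :=
  H.IsSumOn S (fun b : Bool => if b then A else B)

/-- The induced Hoffman subgraph on `S` is non-empty and not a sum of two non-empty
Hoffman subgraphs. -/
def Indecomposable (H : HoffmanGraph V) (S : Set V) : Prop :=
  S.Nonempty ∧ ∀ A B : Set V, A.Nonempty → B.Nonempty → ¬ H.IsSumOn2 S A B

/-- `⟪X⟫`: `X` together with the fat neighbours (inside the carrier `S`) of its members. -/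
def hind (H : HoffmanGraph V) (S X : Set V) : Set V :=
  X ∪ {z | z ∈ S ∧ ¬ H.slim z ∧ ∃ x ∈ X, H.adj x z}

/-- `e` is an isomorphism of Hoffman graphs. -/
def IsIso (H : HoffmanGraph V) (K : HoffmanGraph W) (e : V ≃ W) : Prop :=
  (∀ x y, H.adj x y ↔ K.adj (e x) (e y)) ∧ ∀ x, (H.slim x ↔ K.slim (e x))

/-- `K` is isomorphic to the induced Hoffman subgraph of `L` on `S`. -/
def IsoToInduced (K : HoffmanGraph W) (L : HoffmanGraph U) (S : Set U) : Prop :=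
  ∃ e : W ≃ S, (∀ x y, K.adj x y ↔ L.adj (e x).1 (e y).1) ∧ ∀ x, (K.slim x ↔ L.slim (e x).1)

/-- `K` is isomorphic to an induced Hoffman subgraph of `L`. -/
def IsSubgraphOf (K : HoffmanGraph W) (L : HoffmanGraph U) : Prop :=
  ∃ S : Set U, IsoToInduced K L S

/-- The induced Hoffman subgraph on `S` is (isomorphic to) `𝔥₂`:
one slim vertex adjacent to two fat vertices. -/
def IsH2On (H : HoffmanGraph V) (S : Set V) : Prop :=
  ∃ s f₁ f₂ : V, f₁ ≠ f₂ ∧ S = {s, f₁, f₂} ∧ H.slim s ∧ ¬ H.slim f₁ ∧ ¬ H.slim f₂ ∧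
    H.adj s f₁ ∧ H.adj s f₂

/-- The induced Hoffman subgraph on `S` belongs to the family `𝔒`: it is `𝔥₂` or an
indecomposable fat Hoffman graph with at least 2 slim vertices and exactly one fat vertex. -/
def MemO (H : HoffmanGraph V) (S : Set V) : Prop :=
  H.IsH2On S ∨
  (H.Indecomposable S ∧ 2 ≤ (S ∩ H.slimSet).ncard ∧
    ∃ w ∈ S, ¬ H.slim w ∧ (∀ z ∈ S, ¬ H.slim z → z = w) ∧ ∀ x ∈ S, H.slim x → H.adj x w)

/-- The induced Hoffman subgraph of `L` on `S` is isomorphic to a member of the family `ℋ`. -/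
def MemFam (ℋ : ∀ W : Type, HoffmanGraph W → Prop) (L : HoffmanGraph U) (S : Set U) : Prop :=
  ∃ (W : Type) (K : HoffmanGraph W), ℋ W K ∧ IsoToInduced K L S

/-- `K` is a sum of members of `ℋ`. -/
def IsCoverGraph (ℋ : ∀ W : Type, HoffmanGraph W → Prop) (K : HoffmanGraph U) : Prop :=
  ∃ (n : ℕ) (P : Fin n → Set U), K.IsSumOn Set.univ P ∧ ∀ i, MemFam ℋ K (P i)

/-- `G` is a slim `ℋ`-line graph. -/
def IsSlimLine (ℋ : ∀ W : Type, HoffmanGraph W → Prop) {V : Type} (G : SimpleGraph V) : Prop :=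
  ∃ (U : Type) (K : HoffmanGraph U) (ι : V → U), Finite U ∧ Function.Injective ι ∧
    (∀ a, K.slim (ι a)) ∧ (∀ a b, G.Adj a b ↔ K.adj (ι a) (ι b)) ∧ IsCoverGraph ℋ K

/-- `K` (with slim vertices identified with `V(G)` via `ι`) is a strict `ℋ`-cover of `G`. -/
def IsStrictCover (ℋ : ∀ W : Type, HoffmanGraph W → Prop) {V U : Type}
    (G : SimpleGraph V) (K : HoffmanGraph U) (ι : V → U) : Prop :=
  Finite U ∧ Function.Injective ι ∧ (∀ a b, G.Adj a b ↔ K.adj (ι a) (ι b)) ∧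
  (∀ u, K.slim u ↔ ∃ a, ι a = u) ∧ IsCoverGraph ℋ K

/-- Two strict covers are equivalent: an isomorphism restricting to the identity on `G`. -/
def EquivCovers {V U U' : Type} (K : HoffmanGraph U) (ι : V → U)
    (K' : HoffmanGraph U') (ι' : V → U') : Prop :=
  ∃ φ : U ≃ U', IsIso K K' φ ∧ ∀ a, φ (ι a) = ι' a

/-- The family `ℋ̄ = {𝔥₂} ∪ {𝔤 ∈ 𝔒 : 𝔤 is a Hoffman subgraph of a member of ℋ}`. -/
def BarFam (ℋ : ∀ W : Type, HoffmanGraph W → Prop) : ∀ W : Type, HoffmanGraph W → Prop :=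
  fun _ K => K.IsH2On Set.univ ∨
    (K.MemO Set.univ ∧ ∃ (U : Type) (L : HoffmanGraph U), ℋ U L ∧ IsSubgraphOf K L)

/-- `G` has a strict `ℱ`-cover and it is unique up to equivalence. -/
def UniqueStrictCover (ℱ : ∀ W : Type, HoffmanGraph W → Prop) {V : Type}
    (G : SimpleGraph V) : Prop :=
  (∃ (U : Type) (K : HoffmanGraph U) (ι : V → U), IsStrictCover ℱ G K ι) ∧
  ∀ (U U' : Type) (K : HoffmanGraph U) (K' : HoffmanGraph U') (ι : V → U) (ι' : V → U'),
    IsStrictCover ℱ G K ι → IsStrictCover ℱ G K' ι' → EquivCovers K ι K' ι'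

end HoffmanGraph
namespace HoffmanGraph

variable {V : Type}

/-- Auxiliary relation: slim vertices that must lie in a common addend. -/
def Rrel (H : HoffmanGraph V) (x y : V) : Prop :=
  H.slim x ∧ H.slim y ∧
    ¬((H.fatCommonOn Set.univ x y).ncard ≤ 1 ∧
      ((H.fatCommonOn Set.univ x y).ncard = 1 ↔ H.adj x y))

lemma fatCommonOn_comm (H : HoffmanGraph V) (S : Set V) (x y : V) :
    H.fatCommonOn S x y = H.fatCommonOn S y x := by
  ext z; unfold fatCommonOn; simp only [Set.mem_setOf_eq]; tauto

lemma mem_of_Rrel {ι : Type} (H : HoffmanGraph V) (P : ι → Set V)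
    (hP : H.IsSumOn Set.univ P) {i : ι} {x y : V} (hx : x ∈ P i) (hr : H.Rrel x y) :
    y ∈ P i := by
  obtain ⟨h1, h2, h3, h4, h5, h6⟩ := hP
  have : y ∈ ⋃ i, P i := h2 ▸ Set.mem_univ y
  obtain ⟨j, hj⟩ := Set.mem_iUnion.1 this
  by_cases hij : j = i
  · exact hij ▸ hj
  · exact absurd (h6 i j (Ne.symm hij) x hx y hj hr.1 hr.2.1) hr.2.2

lemma mem_of_rt {ι : Type} (H : HoffmanGraph V) (P : ι → Set V)
    (hP : H.IsSumOn Set.univ P) {i : ι} {x y : V} (hx : x ∈ P i)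
    (hr : Relation.ReflTransGen H.Rrel x y) : y ∈ P i := by
  induction hr with
  | refl => exact hx
  | tail _ h ih => exact mem_of_Rrel H P hP ih h

lemma exists_slim_mem {ι : Type} (H : HoffmanGraph V) (P : ι → Set V)
    (hP : H.IsSumOn Set.univ P) {i : ι} (hne : (P i).Nonempty) :
    ∃ x ∈ P i, H.slim x := by
  obtain ⟨v, hv⟩ := hne
  by_cases hs : H.slim v
  · exact ⟨v, hv, hs⟩
  · obtain ⟨c, hc, hcs, _⟩ := hP.2.2.2.2.1 i v hv hs
    exact ⟨c, hc, hcs⟩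

lemma connected_of_indec [Fintype V] {ι : Type} (H : HoffmanGraph V) (P : ι → Set V)
    (hP : H.IsSumOn Set.univ P) {i : ι} (hind : H.Indecomposable (P i))
    {x y : V} (hx : x ∈ P i) (hy : y ∈ P i) (hsx : H.slim x) (hsy : H.slim y) :
    Relation.ReflTransGen H.Rrel x y := by
  by_contra hxy
  obtain ⟨hP1, hP2, hP3, hP4, hP5, hP6⟩ := hP
  classical
  set C : Set V := {c | c ∈ P i ∧ H.slim c ∧ Relation.ReflTransGen H.Rrel x c} with hC
  set D : Set V := {d | d ∈ P i ∧ H.slim d ∧ ¬ Relation.ReflTransGen H.Rrel x d} with hD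
  set A : Set V := C ∪ {z | z ∈ P i ∧ ¬ H.slim z ∧ ∃ c ∈ C, H.adj c z} with hA
  set B : Set V := D ∪ {z | z ∈ P i ∧ ¬ H.slim z ∧ ∃ d ∈ D, H.adj d z} with hB
  have hAsub : A ⊆ P i := by
    rintro v (⟨hv, _⟩ | ⟨hv, _⟩) <;> exact hv
  have hBsub : B ⊆ P i := by
    rintro v (⟨hv, _⟩ | ⟨hv, _⟩) <;> exact hv
  have hslimA : ∀ v ∈ A, H.slim v → v ∈ C := by
    rintro v (hv | ⟨_, hvf, _⟩) hs
    · exact hv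
    · exact absurd hs hvf
  have hslimB : ∀ v ∈ B, H.slim v → v ∈ D := by
    rintro v (hv | ⟨_, hvf, _⟩) hs
    · exact hv
    · exact absurd hs hvf
  -- the key cross condition
  have key : ∀ c ∈ C, ∀ d ∈ D,
      (H.fatCommonOn (P i) c d).ncard ≤ 1 ∧
      ((H.fatCommonOn (P i) c d).ncard = 1 ↔ H.adj c d) := by
    intro c hc d hd
    have hnR : ¬ H.Rrel c d := fun hr => hd.2.2 (hc.2.2.tail hr)
    have hΦ : (H.fatCommonOn Set.univ c d).ncard ≤ 1 ∧
        ((H.fatCommonOn Set.univ c d).ncard = 1 ↔ H.adj c d) := by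
      by_contra h
      exact hnR ⟨hc.2.1, hd.2.1, h⟩
    have hsub : H.fatCommonOn (P i) c d ⊆ H.fatCommonOn Set.univ c d :=
      fun z hz => ⟨Set.mem_univ z, hz.2⟩
    have hle : (H.fatCommonOn (P i) c d).ncard ≤ (H.fatCommonOn Set.univ c d).ncard :=
      Set.ncard_le_ncard hsub (Set.toFinite _)
    refine ⟨hle.trans hΦ.1, ⟨fun h1 => ?_, fun hadj => ?_⟩⟩
    · exact hΦ.2.1 (le_antisymm hΦ.1 (h1 ▸ hle))
    · have h1 := hΦ.2.2 hadj
      obtain ⟨z, hz⟩ := Set.ncard_eq_one.1 h1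
      have hzmem : z ∈ H.fatCommonOn Set.univ c d := hz ▸ rfl
      obtain ⟨_, hzfat, hzc, hzd⟩ := hzmem
      have hzPi : z ∈ P i := hP4 i c hc.1 hc.2.1 z (Set.mem_univ z) hzfat hzc
      have hpos : 0 < (H.fatCommonOn (P i) c d).ncard :=
        (Set.ncard_pos (Set.toFinite _)).2 ⟨z, hzPi, hzfat, hzc, hzd⟩
      omega
  have hsum : H.IsSumOn2 (P i) A B := by
    refine ⟨?_, ?_, ?_, ?_, ?_, ?_⟩
    · intro b
      cases b with
      | true => exact hAsub
      | false => exact hBsub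
    · apply Set.Subset.antisymm
      · intro v hv
        obtain ⟨s, hs⟩ := Set.mem_iUnion.1 hv
        cases s with
        | true => exact hAsub hs
        | false => exact hBsub hs
      · intro v hv
        by_cases hs : H.slim v
        · by_cases hrt : Relation.ReflTransGen H.Rrel x v
          · exact Set.mem_iUnion.2 ⟨true, Or.inl ⟨hv, hs, hrt⟩⟩
          · exact Set.mem_iUnion.2 ⟨false, Or.inl ⟨hv, hs, hrt⟩⟩
        · obtain ⟨c, hc, hcs, hadj⟩ := hP5 i v hv hs
          by_cases hrt : Relation.ReflTransGen H.Rrel x c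
          · exact Set.mem_iUnion.2 ⟨true,
              Or.inr ⟨hv, hs, c, ⟨hc, hcs, hrt⟩, H.symm hadj⟩⟩
          · exact Set.mem_iUnion.2 ⟨false,
              Or.inr ⟨hv, hs, c, ⟨hc, hcs, hrt⟩, H.symm hadj⟩⟩
    · intro v hv hs
      by_cases hrt : Relation.ReflTransGen H.Rrel x v
      · refine ⟨true, Or.inl ⟨hv, hs, hrt⟩, ?_⟩
        intro b hb
        cases b with
        | true => rfl
        | false =>
          have hb' : v ∈ B := hb
          exact absurd (hslimB v hb' hs).2.2 (not_not.2 hrt)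
      · refine ⟨false, Or.inl ⟨hv, hs, hrt⟩, ?_⟩
        intro b hb
        cases b with
        | false => rfl
        | true =>
          have hb' : v ∈ A := hb
          exact absurd hrt (not_not.2 (hslimA v hb' hs).2.2)
    · intro b v hv hs z hz hzf hadj
      cases b with
      | true =>
        have hv' : v ∈ A := hv
        exact (Or.inr ⟨hz, hzf, v, hslimA v hv' hs, hadj⟩ : z ∈ A)
      | false =>
        have hv' : v ∈ B := hv
        exact (Or.inr ⟨hz, hzf, v, hslimB v hv' hs, hadj⟩ : z ∈ B)
    · intro b z hz hzf
      cases b with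
      | true =>
        have hz' : z ∈ A := hz
        rcases hz' with hz' | ⟨_, _, c, hc, hadj⟩
        · exact absurd hz'.2.1 hzf
        · exact ⟨c, Or.inl hc, hc.2.1, H.symm hadj⟩
      | false =>
        have hz' : z ∈ B := hz
        rcases hz' with hz' | ⟨_, _, d, hd, hadj⟩
        · exact absurd hz'.2.1 hzf
        · exact ⟨d, Or.inl hd, hd.2.1, H.symm hadj⟩
    · intro b b' hbb' v hv w hw hsv hsw
      cases b with
      | true =>
        cases b' with
        | true => exact absurd rfl hbb'
        | false =>
          have hv' : v ∈ A := hv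
          have hw' : w ∈ B := hw
          exact key v (hslimA v hv' hsv) w (hslimB w hw' hsw)
      | false =>
        cases b' with
        | false => exact absurd rfl hbb'
        | true =>
          have hv' : v ∈ B := hv
          have hw' : w ∈ A := hw
          have hk := key w (hslimA w hw' hsw) v (hslimB v hv' hsv)
          rw [fatCommonOn_comm]
          exact ⟨hk.1, hk.2.trans ⟨fun h => H.symm h, fun h => H.symm h⟩⟩
  have hAne : A.Nonempty := ⟨x, Or.inl ⟨hx, hsx, Relation.ReflTransGen.refl⟩⟩
  have hBne : B.Nonempty := ⟨y, Or.inl ⟨hy, hsy, hxy⟩⟩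
  exact hind.2 A B hAne hBne hsum

end HoffmanGraph

open HoffmanGraph in
/-- Uniqueness of decompositions into indecomposable addends. -/
theorem stmt0 {V : Type} [Fintype V] (H : HoffmanGraph V) (k l : ℕ)
    (P : Fin (k + 1) → Set V) (Q : Fin (l + 1) → Set V)
    (hP : H.IsSumOn Set.univ P) (hQ : H.IsSumOn Set.univ Q)
    (hPind : ∀ i, H.Indecomposable (P i)) (hQind : ∀ i, H.Indecomposable (Q i)) :
    k = l ∧ ∃ σ : Fin (k + 1) ≃ Fin (l + 1), ∀ i, P i = Q (σ i) := by
  classical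
  have hxall : ∀ i : Fin (k + 1), ∃ x, x ∈ P i ∧ H.slim x := by
    intro i
    obtain ⟨x, hx, hs⟩ := exists_slim_mem H P hP (hPind i).1
    exact ⟨x, hx, hs⟩
  choose x hxP hxs using hxall
  have hσall : ∀ i, ∃ j, x i ∈ Q j := by
    intro i
    exact Set.mem_iUnion.1 (hQ.2.1 ▸ Set.mem_univ (x i))
  choose σ hσQ using hσall
  have Peq : ∀ i, P i = Q (σ i) := by
    intro i
    ext v
    constructor
    · intro hv
      by_cases hs : H.slim v
      · exact mem_of_rt H Q hQ (hσQ i)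
          (connected_of_indec H P hP (hPind i) (hxP i) hv (hxs i) hs)
      · obtain ⟨c, hc, hcs, hadj⟩ := hP.2.2.2.2.1 i v hv hs
        have hcQ : c ∈ Q (σ i) := mem_of_rt H Q hQ (hσQ i)
          (connected_of_indec H P hP (hPind i) (hxP i) hc (hxs i) hcs)
        exact hQ.2.2.2.1 (σ i) c hcQ hcs v (Set.mem_univ v) hs (H.symm hadj)
    · intro hv
      by_cases hs : H.slim v
      · exact mem_of_rt H P hP (hxP i)
          (connected_of_indec H Q hQ (hQind (σ i)) (hσQ i) hv (hxs i) hs)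
      · obtain ⟨c, hc, hcs, hadj⟩ := hQ.2.2.2.2.1 (σ i) v hv hs
        have hcP : c ∈ P i := mem_of_rt H P hP (hxP i)
          (connected_of_indec H Q hQ (hQind (σ i)) (hσQ i) hc (hxs i) hcs)
        exact hP.2.2.2.1 i c hcP hcs v (Set.mem_univ v) hs (H.symm hadj)
  have hinj : Function.Injective σ := by
    intro i i' h
    have hPP : P i = P i' := by rw [Peq i, Peq i', h]
    exact (hP.2.2.1 (x i) (Set.mem_univ _) (hxs i)).unique (hxP i) (hPP ▸ hxP i)
  have hsurj : Function.Surjective σ := by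
    intro j
    obtain ⟨y, hy, hys⟩ := exists_slim_mem H Q hQ (hQind j).1
    have : y ∈ ⋃ i, P i := hP.2.1 ▸ Set.mem_univ y
    obtain ⟨i, hi⟩ := Set.mem_iUnion.1 this
    refine ⟨i, ?_⟩
    have hyQ : y ∈ Q (σ i) := (Peq i) ▸ hi
    exact (hQ.2.2.1 y (Set.mem_univ _) hys).unique hyQ hy
  let e : Fin (k + 1) ≃ Fin (l + 1) := Equiv.ofBijective σ ⟨hinj, hsurj⟩
  have hcard : k + 1 = l + 1 := by
    have := Fintype.card_congr e
    simpa using this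
  refine ⟨by omega, e, fun i => ?_⟩
  exact Peq i
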